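/- Let σ : [0,∞) → {1,2,3,4} be any measurable switching signal and let X : [0,∞) → ℝ² be continuous with X(t) = X(0) + ∫₀ᵗ G(σ(τ), X(τ)) dτ for all t ≥ 0 and X(t) ∈ [0,∞)² for all t ≥ 0. If X(0) ∈ M := [x̄₁,∞)×[x̄₂,∞), then X(t) ∈ M for all t ≥ 0; that is, M is positively invariant for the switched dynamics. -/

import Mathlib

open Real Set MeasureTheory Filter

/-- Inflow function `μ_k(s, x)` for modes `s ∈ {1,2,3,4}` (indexed `0..3`) and links
`k ∈ {1,2}` (indexed `0..1`). -/
noncomputable def mu (β η : ℝ) (s : Fin 4) (k : Fin 2) (x : ℝ × ℝ) : ℝ :=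
  match s.val, k.val with
  | 0, 0 => η * Real.exp (-β * x.1) / (Real.exp (-β * x.1) + Real.exp (-β * x.2))
  | 0, _ => η * Real.exp (-β * x.2) / (Real.exp (-β * x.1) + Real.exp (-β * x.2))
  | 1, 0 => η / (1 + Real.exp (-β * x.2))
  | 1, _ => η * Real.exp (-β * x.2) / (1 + Real.exp (-β * x.2))
  | 2, 0 => η * Real.exp (-β * x.1) / (Real.exp (-β * x.1) + 1)
  | 2, _ => η / (Real.exp (-β * x.1) + 1)
  | _, _ => η / 2

/-- Outflow (sending) function `f_k(y) = F_k (1 - e^{-y})` of link `k`. -/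
noncomputable def fOut (F : Fin 2 → ℝ) (k : Fin 2) (y : ℝ) : ℝ :=
  F k * (1 - Real.exp (-y))

/-- The mode-`s` vector field `G(s,x) = (μ₁(s,x) − f₁(x₁), μ₂(s,x) − f₂(x₂))`. -/
noncomputable def Gvec (β η : ℝ) (F : Fin 2 → ℝ) (s : Fin 4) (x : ℝ × ℝ) : ℝ × ℝ :=
  (mu β η s 0 x - fOut F 0 x.1, mu β η s 1 x - fOut F 1 x.2)

/-- The `k`-th coordinate of `x ∈ ℝ²`. -/
def coord (x : ℝ × ℝ) (k : Fin 2) : ℝ := if k = 0 then x.1 else x.2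

/-! ### Auxiliary lemmas -/

lemma mu_nonneg (β η : ℝ) (hη : 0 ≤ η) (s : Fin 4) (k : Fin 2) (x : ℝ × ℝ) :
    0 ≤ mu β η s k x := by
  have e1 := Real.exp_pos (-β * x.1)
  have e2 := Real.exp_pos (-β * x.2)
  fin_cases s <;> fin_cases k <;> simp only [mu] <;> positivity

lemma mu_le (β η : ℝ) (hη : 0 ≤ η) (s : Fin 4) (k : Fin 2) (x : ℝ × ℝ) :
    mu β η s k x ≤ η := by
  have e1 := Real.exp_pos (-β * x.1)
  have e2 := Real.exp_pos (-β * x.2)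
  fin_cases s <;> fin_cases k <;> simp only [mu] <;>
    rw [div_le_iff₀ (by positivity)] <;> nlinarith

lemma mu_continuous (β η : ℝ) (s : Fin 4) (k : Fin 2) :
    Continuous (fun x : ℝ × ℝ => mu β η s k x) := by
  fin_cases s <;> fin_cases k <;> simp only [mu] <;>
    exact Continuous.div (by fun_prop) (by fun_prop) (fun x => by positivity)

lemma mu_ge_barrier (β η : ℝ) (hβ : 0 ≤ β) (hη : 0 ≤ η) (s : Fin 4) (x : ℝ × ℝ)
    (h1 : 0 ≤ x.1) (h2 : 0 ≤ x.2) :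
    (η * Real.exp (-β * x.1) / (1 + Real.exp (-β * x.1)) ≤ mu β η s 0 x) ∧
    (η * Real.exp (-β * x.2) / (1 + Real.exp (-β * x.2)) ≤ mu β η s 1 x) := by
  have e1 := Real.exp_pos (-β * x.1)
  have e2 := Real.exp_pos (-β * x.2)
  have l1 : Real.exp (-β * x.1) ≤ 1 := Real.exp_le_one_iff.2 (by nlinarith)
  have l2 : Real.exp (-β * x.2) ≤ 1 := Real.exp_le_one_iff.2 (by nlinarith)
  have hab : Real.exp (-β * x.1) * Real.exp (-β * x.2) ≤ 1 := mul_le_one₀ l1 e2.le l2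
  constructor <;> fin_cases s <;> simp only [mu, Fin.val_zero, Fin.val_one] <;>
    rw [div_le_div_iff₀ (by positivity) (by positivity)] <;>
    nlinarith [mul_nonneg hη e1.le, mul_nonneg hη e2.le,
      mul_nonneg hη (mul_nonneg e1.le e2.le),
      mul_nonneg (mul_nonneg hη e1.le) (sub_nonneg.2 l2),
      mul_nonneg (mul_nonneg hη e2.le) (sub_nonneg.2 l1),
      mul_nonneg hη (sub_nonneg.2 hab)]

/-- Below the equilibrium, the barrier inflow dominates the outflow. -/
lemma barrier_le (β η Fk xbk : ℝ) (hβ : 0 < β) (hη : 0 < η) (hFk : 0 ≤ Fk)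
    (heqn : η * Real.exp (-β * xbk) / (1 + Real.exp (-β * xbk)) = Fk * (1 - Real.exp (-xbk)))
    (y : ℝ) (hy : 0 ≤ y) (hyle : y ≤ xbk) :
    Fk * (1 - Real.exp (-y)) ≤ η * Real.exp (-β * y) / (1 + Real.exp (-β * y)) := by
  have hp := Real.exp_pos (-β * y)
  have hq := Real.exp_pos (-β * xbk)
  have hpq : Real.exp (-β * xbk) ≤ Real.exp (-β * y) := Real.exp_le_exp.2 (by nlinarith)
  have h1 : Fk * (1 - Real.exp (-y)) ≤ Fk * (1 - Real.exp (-xbk)) := by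
    have h := Real.exp_le_exp.2 (neg_le_neg hyle)
    nlinarith
  have h2 : η * Real.exp (-β * xbk) / (1 + Real.exp (-β * xbk)) ≤
      η * Real.exp (-β * y) / (1 + Real.exp (-β * y)) := by
    rw [div_le_div_iff₀ (by positivity) (by positivity)]
    nlinarith [mul_nonneg hη.le (sub_nonneg.2 hpq)]
  calc Fk * (1 - Real.exp (-y)) ≤ Fk * (1 - Real.exp (-xbk)) := h1
    _ = η * Real.exp (-β * xbk) / (1 + Real.exp (-β * xbk)) := heqn.symm
    _ ≤ _ := h2

/-- Integrability of a switched composition. -/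
lemma integrable_comp (σ : ℝ → Fin 4) (hσ : Measurable σ) (X : ℝ → ℝ × ℝ)
    (hX : ContinuousOn X (Set.Ici 0)) (φ : Fin 4 → ℝ × ℝ → ℝ)
    (hφ : ∀ s, Continuous (φ s)) (C : ℝ)
    (hbd : ∀ s τ, 0 ≤ τ → |φ s (X τ)| ≤ C) (t : ℝ) (ht : 0 ≤ t) :
    IntervalIntegrable (fun τ => φ (σ τ) (X τ)) MeasureTheory.volume 0 t := by
  rw [intervalIntegrable_iff_integrableOn_Ioc_of_le ht]
  have hXm : AEStronglyMeasurable X (MeasureTheory.volume.restrict (Set.Ioc 0 t)) :=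
    (hX.mono (Set.Ioc_subset_Icc_self.trans Set.Icc_subset_Ici_self)).aestronglyMeasurable
      measurableSet_Ioc
  have hsm : AEStronglyMeasurable (fun τ => φ (σ τ) (X τ))
      (MeasureTheory.volume.restrict (Set.Ioc 0 t)) := by
    have : (fun τ => φ (σ τ) (X τ)) =
        fun τ => ∑ s : Fin 4, Set.indicator (σ ⁻¹' {s}) (fun τ' => φ s (X τ')) τ := by
      funext τ
      rw [Finset.sum_eq_single (σ τ)]
      · simp [Set.indicator_of_mem, Set.mem_preimage]
      · intro b _ hb
        simp [Set.indicator_of_notMem, Set.mem_preimage, hb.symm]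
      · simp
    rw [this]
    apply Finset.aestronglyMeasurable_fun_sum
    intro s _
    exact (((hφ s).comp_aestronglyMeasurable hXm)).indicator (hσ (measurableSet_singleton s))
  apply MeasureTheory.Integrable.mono' (MeasureTheory.integrable_const C) hsm
  filter_upwards [MeasureTheory.ae_restrict_mem measurableSet_Ioc] with τ hτ
  exact hbd (σ τ) τ hτ.1.le

/-- Scalar positive-invariance principle for an integral equation. -/
lemma invariant_aux (u g : ℝ → ℝ) (xbar : ℝ)
    (hcont : ContinuousOn u (Set.Ici 0))
    (hint : ∀ t, 0 ≤ t → IntervalIntegrable g MeasureTheory.volume 0 t)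
    (heq : ∀ t, 0 ≤ t → u t = u 0 + ∫ τ in (0:ℝ)..t, g τ)
    (hpos : ∀ τ, 0 ≤ τ → u τ < xbar → 0 ≤ g τ)
    (h0 : xbar ≤ u 0) : ∀ t, 0 ≤ t → xbar ≤ u t := by
  intro t1 ht1
  by_contra hlt
  push_neg at hlt
  set S : Set ℝ := Set.Icc 0 t1 ∩ u ⁻¹' (Set.Ici xbar) with hSdef
  have hS0 : (0:ℝ) ∈ S := ⟨⟨le_refl 0, ht1⟩, h0⟩
  have hSbdd : BddAbove S := ⟨t1, fun τ hτ => hτ.1.2⟩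
  have hSclosed : IsClosed S :=
    (hcont.mono (Set.Icc_subset_Ici_self)).preimage_isClosed_of_isClosed isClosed_Icc isClosed_Ici
  have ht0mem : sSup S ∈ S := hSclosed.csSup_mem ⟨0, hS0⟩ hSbdd
  set t0 := sSup S with ht0def
  have ht0nn : 0 ≤ t0 := ht0mem.1.1
  have ht0le : t0 ≤ t1 := ht0mem.1.2
  have hut0 : xbar ≤ u t0 := ht0mem.2
  have ht0lt : t0 < t1 := lt_of_le_of_ne ht0le (fun h => absurd (h ▸ hut0) (not_le.2 hlt))
  have hIoc : ∀ τ ∈ Set.Ioc t0 t1, 0 ≤ g τ := by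
    intro τ hτ
    apply hpos τ (ht0nn.trans hτ.1.le)
    by_contra hge; push_neg at hge
    have hmem : τ ∈ S := ⟨⟨ht0nn.trans hτ.1.le, hτ.2⟩, hge⟩
    exact absurd (le_csSup hSbdd hmem) (not_le.2 hτ.1)
  have hi1 := hint t0 ht0nn
  have hi2 : IntervalIntegrable g MeasureTheory.volume t0 t1 :=
    (hint t1 ht1).mono_set (by
      rw [Set.uIcc_of_le ht0le, Set.uIcc_of_le ht1]
      exact Set.Icc_subset_Icc ht0nn le_rfl)
  have hsum := intervalIntegral.integral_add_adjacent_intervals hi1 hi2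
  have e1 := heq t1 ht1
  have e2 := heq t0 ht0nn
  have hnn : 0 ≤ ∫ τ in t0..t1, g τ := by
    rw [intervalIntegral.integral_of_le ht0lt.le]
    exact MeasureTheory.setIntegral_nonneg measurableSet_Ioc hIoc
  linarith

/-- the set `M = [x̄₁,∞) × [x̄₂,∞)` is positively invariant for the switched
dynamics `Ẋ = G(σ(t), X(t))` (in integral form), with `x̄_k` the unique nonnegative
solution of `η·exp(−βx)/(1+exp(−βx)) = F_k (1−exp(−x))`. -/
theorem stmt4 (β η : ℝ) (F : Fin 2 → ℝ) (hβ : 0 < β) (hη : 0 < η)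
    (hF : ∀ k, 0 < F k) (xb : Fin 2 → ℝ)
    (hxb_nonneg : ∀ k, 0 ≤ xb k)
    (hxb_eq : ∀ k, η * Real.exp (-β * xb k) / (1 + Real.exp (-β * xb k)) =
      F k * (1 - Real.exp (-xb k)))
    (hxb_unique : ∀ k y, 0 ≤ y →
      η * Real.exp (-β * y) / (1 + Real.exp (-β * y)) = F k * (1 - Real.exp (-y)) → y = xb k)
    (σ : ℝ → Fin 4) (hσ : Measurable σ)
    (X : ℝ → ℝ × ℝ) (hXcont : ContinuousOn X (Set.Ici (0 : ℝ)))
    (hXeq : ∀ t : ℝ, 0 ≤ t → X t = X 0 + ∫ τ in (0 : ℝ)..t, Gvec β η F (σ τ) (X τ))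
    (hXnn : ∀ t : ℝ, 0 ≤ t → X t ∈ Set.Ici (0 : ℝ) ×ˢ Set.Ici (0 : ℝ))
    (hX0 : X 0 ∈ Set.Ici (xb 0) ×ˢ Set.Ici (xb 1)) :
    ∀ t : ℝ, 0 ≤ t → X t ∈ Set.Ici (xb 0) ×ˢ Set.Ici (xb 1) := by
  -- bound on each coordinate of the vector field
  have hbd : ∀ (k : Fin 2) (s : Fin 4) (τ : ℝ), 0 ≤ τ →
      |mu β η s k (X τ) - fOut F k (coord (X τ) k)| ≤ η + F k := by
    intro k s τ hτ
    have hnn := hXnn τ hτ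
    have hx1 : 0 ≤ (X τ).1 := hnn.1
    have hx2 : 0 ≤ (X τ).2 := hnn.2
    have hcnn : 0 ≤ coord (X τ) k := by
      fin_cases k <;> simpa [coord]
    have hmu0 := mu_nonneg β η hη.le s k (X τ)
    have hmu1 := mu_le β η hη.le s k (X τ)
    have hexp : Real.exp (-(coord (X τ) k)) ≤ 1 := Real.exp_le_one_iff.2 (by linarith)
    have hexp0 := Real.exp_pos (-(coord (X τ) k))
    have hf0 : 0 ≤ fOut F k (coord (X τ) k) := by
      simp only [fOut]; nlinarith [(hF k).le]
    have hf1 : fOut F k (coord (X τ) k) ≤ F k := by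
      simp only [fOut]; nlinarith [(hF k).le]
    rw [abs_le]
    constructor <;> linarith
  -- integrability of each coordinate of the composed field
  have hint1 : ∀ t, 0 ≤ t → IntervalIntegrable
      (fun τ => (Gvec β η F (σ τ) (X τ)).1) MeasureTheory.volume 0 t := by
    intro t ht
    refine integrable_comp σ hσ X hXcont (fun s x => (Gvec β η F s x).1) (fun s => ?_)
      (η + F 0) (fun s τ hτ => ?_) t ht
    · exact (mu_continuous β η s 0).sub (by simp only [fOut]; fun_prop)
    · simpa [Gvec, coord] using hbd 0 s τ hτ
  have hint2 : ∀ t, 0 ≤ t → IntervalIntegrable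
      (fun τ => (Gvec β η F (σ τ) (X τ)).2) MeasureTheory.volume 0 t := by
    intro t ht
    refine integrable_comp σ hσ X hXcont (fun s x => (Gvec β η F s x).2) (fun s => ?_)
      (η + F 1) (fun s τ hτ => ?_) t ht
    · exact (mu_continuous β η s 1).sub (by simp only [fOut]; fun_prop)
    · simpa [Gvec, coord] using hbd 1 s τ hτ
  have hpair : ∀ t, 0 ≤ t → IntervalIntegrable
      (fun τ => Gvec β η F (σ τ) (X τ)) MeasureTheory.volume 0 t := by
    intro t ht
    exact ⟨((hint1 t ht).1.prodMk (hint2 t ht).1), ((hint1 t ht).2.prodMk (hint2 t ht).2)⟩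
  -- coordinate-wise integral equations
  have heq1 : ∀ t, 0 ≤ t →
      (fun τ => (X τ).1) t = (fun τ => (X τ).1) 0 +
        ∫ τ in (0:ℝ)..t, (Gvec β η F (σ τ) (X τ)).1 := by
    intro t ht
    have hc : (∫ τ in (0:ℝ)..t, Gvec β η F (σ τ) (X τ)).1 =
        ∫ τ in (0:ℝ)..t, (Gvec β η F (σ τ) (X τ)).1 := by
      simpa using ((ContinuousLinearMap.fst ℝ ℝ ℝ).intervalIntegral_comp_comm (hpair t ht)).symm
    simp only []
    rw [hXeq t ht, Prod.fst_add, hc]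
  have heq2 : ∀ t, 0 ≤ t →
      (fun τ => (X τ).2) t = (fun τ => (X τ).2) 0 +
        ∫ τ in (0:ℝ)..t, (Gvec β η F (σ τ) (X τ)).2 := by
    intro t ht
    have hc : (∫ τ in (0:ℝ)..t, Gvec β η F (σ τ) (X τ)).2 =
        ∫ τ in (0:ℝ)..t, (Gvec β η F (σ τ) (X τ)).2 := by
      simpa using ((ContinuousLinearMap.snd ℝ ℝ ℝ).intervalIntegral_comp_comm (hpair t ht)).symm
    simp only []
    rw [hXeq t ht, Prod.snd_add, hc]
  -- positivity of the field below the equilibrium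
  have hpos1 : ∀ τ, 0 ≤ τ → (X τ).1 < xb 0 → 0 ≤ (Gvec β η F (σ τ) (X τ)).1 := by
    intro τ hτ hlt
    have hnn := hXnn τ hτ
    have hb := (mu_ge_barrier β η hβ.le hη.le (σ τ) (X τ) hnn.1 hnn.2).1
    have hb2 := barrier_le β η (F 0) (xb 0) hβ hη (hF 0).le (hxb_eq 0) (X τ).1 hnn.1 hlt.le
    simp only [Gvec, fOut]
    linarith
  have hpos2 : ∀ τ, 0 ≤ τ → (X τ).2 < xb 1 → 0 ≤ (Gvec β η F (σ τ) (X τ)).2 := by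
    intro τ hτ hlt
    have hnn := hXnn τ hτ
    have hb := (mu_ge_barrier β η hβ.le hη.le (σ τ) (X τ) hnn.1 hnn.2).2
    have hb2 := barrier_le β η (F 1) (xb 1) hβ hη (hF 1).le (hxb_eq 1) (X τ).2 hnn.2 hlt.le
    simp only [Gvec, fOut]
    linarith
  intro t ht
  constructor
  · exact invariant_aux (fun τ => (X τ).1) (fun τ => (Gvec β η F (σ τ) (X τ)).1) (xb 0)
      (continuous_fst.comp_continuousOn hXcont) hint1 heq1 hpos1 hX0.1 t ht
  · exact invariant_aux (fun τ => (X τ).2) (fun τ => (Gvec β η F (σ τ) (X τ)).2) (xb 1)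
      (continuous_snd.comp_continuousOn hXcont) hint2 heq2 hpos2 hX0.2 t ht
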